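/- Let K be a field with q^n elements and let τ, δ ∈ K satisfy δ^{q^{n−1}} + δ^{q^{n−2}} + … + δ^q + δ = s_{n,2}(τ). Let L be any field extension of K and let x, y ∈ L. Then y^{q^{n−1}} + y^{q^{n−2}} + … + y^q + y = s_{n,2}(x) holds if and only if, setting x' = x + τ and y' = y + x·(τ^q + τ^{q^2} + … + τ^{q^{n−1}}) + δ, one has y'^{q^{n−1}} + y'^{q^{n−2}} + … + y'^q + y' = s_{n,2}(x'). (Hence σ(x) = x + τ, σ(y) = y + x·(τ^q + … + τ^{q^{n−1}}) + δ defines an automorphism of the function field E_2 fixing the rational function field.) -/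
import Mathlib


open Polynomial

/-- The `i`-th `(n,q)`-elementary symmetric polynomial
`s_{n,i}(t) = Σ_{S ⊆ {0,…,n−1}, |S| = i} t^(Σ_{j ∈ S} q^j)`. -/
noncomputable def snq (q n i : ℕ) (R : Type*) [CommRing R] : Polynomial R :=
  ∑ S ∈ Finset.powersetCard i (Finset.range n), X ^ (∑ j ∈ S, q ^ j)

/-- Sum over 2-element subsets of `range n` as a double sum. -/
lemma pc2 {M : Type*} [AddCommMonoid M] (w : ℕ → ℕ) (h : ℕ → M) (n : ℕ) :
    ∑ S ∈ Finset.powersetCard 2 (Finset.range n), h (∑ j ∈ S, w j)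
      = ∑ k ∈ Finset.range n, ∑ j ∈ Finset.range k, h (w j + w k) := by
  induction n with
  | zero =>
    rw [show Finset.powersetCard 2 (Finset.range 0) = ∅ from
      Finset.powersetCard_eq_empty.mpr (by simp)]
    simp
  | succ n ih =>
    rw [Finset.sum_range_succ, Finset.range_add_one,
      Finset.powersetCard_succ_insert Finset.notMem_range_self,
      Finset.sum_union, Finset.sum_image, show Nat.succ 1 = 2 from rfl, ih]
    · congr 1
      rw [Finset.powersetCard_one, Finset.sum_map]
      refine Finset.sum_congr rfl fun j hj => ?_
      have hjn : j ≠ n := by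
        intro h; subst h; exact Finset.notMem_range_self hj
      simp only [Function.Embedding.coeFn_mk]
      rw [Finset.sum_insert (by simp [hjn.symm]), Finset.sum_singleton, add_comm (w n)]
    · intro S hS S' hS' hins
      have hnS : n ∉ S := fun h =>
        Finset.notMem_range_self ((Finset.mem_powersetCard.mp hS).1 h)
      have hnS' : n ∉ S' := fun h =>
        Finset.notMem_range_self ((Finset.mem_powersetCard.mp hS').1 h)
      rw [← Finset.erase_insert hnS, ← Finset.erase_insert hnS', hins]
    · rw [Finset.disjoint_left]
      intro S hS hS'
      obtain ⟨S', hS', rfl⟩ := Finset.mem_image.mp hS'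
      exact Finset.notMem_range_self
        ((Finset.mem_powersetCard.mp hS).1 (Finset.mem_insert_self n S'))

lemma snq2_eval {R : Type*} [CommRing R] (q n : ℕ) (t : R) :
    (snq q n 2 R).eval t
      = ∑ k ∈ Finset.range n, ∑ j ∈ Finset.range k, t ^ (q ^ j + q ^ k) := by
  rw [snq, eval_finset_sum]
  simp only [eval_pow, eval_X]
  exact pc2 (fun j => q ^ j) (fun m => t ^ m) n

lemma pair_sum {R : Type*} [CommRing R] (u v : ℕ → R) (n : ℕ) :
    ∑ k ∈ Finset.range n, ∑ j ∈ Finset.range k, (u j * v k + v j * u k)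
      = (∑ j ∈ Finset.range n, u j) * (∑ j ∈ Finset.range n, v j)
        - ∑ j ∈ Finset.range n, u j * v j := by
  induction n with
  | zero => simp
  | succ n ih =>
    rw [Finset.sum_range_succ, ih, Finset.sum_range_succ, Finset.sum_range_succ,
      Finset.sum_range_succ, Finset.sum_add_distrib, ← Finset.sum_mul, ← Finset.sum_mul]
    ring

lemma shift_sum {L : Type*} [CommRing L] (c : L) (q n : ℕ) (hn : 0 < n)
    (hc : c ^ q ^ n = c) (j : ℕ) :
    ∑ i ∈ Finset.range n, c ^ q ^ (i + j) = ∑ i ∈ Finset.range n, c ^ q ^ i := by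
  induction j with
  | zero => simp
  | succ j ih =>
    obtain ⟨m, rfl⟩ : ∃ m, n = m + 1 := ⟨n - 1, (Nat.succ_pred_eq_of_pos hn).symm⟩
    rw [← ih, Finset.sum_range_succ, Finset.sum_range_succ']
    congr 1
    · exact Finset.sum_congr rfl fun i _ => by rw [show i + 1 + j = i + (j + 1) by omega]
    · rw [show m + (j + 1) = (m + 1) + j by omega, pow_add, pow_mul, hc, zero_add]

theorem stmt_16 (p e n q : ℕ) (hp : p.Prime) (he : 0 < e) (hn : 2 ≤ n) (hq : q = p ^ e)
    (K : Type*) [Field K] (hK : Nat.card K = q ^ n)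
    (τ δ : K)
    (hτδ : ∑ j ∈ Finset.range n, δ ^ q ^ j = (snq q n 2 K).eval τ)
    (L : Type*) [Field L] [Algebra K L] (x y : L) :
    (∑ j ∈ Finset.range n, y ^ q ^ j = (snq q n 2 L).eval x) ↔
      (∑ j ∈ Finset.range n,
          (y + x * (∑ j ∈ Finset.Ico 1 n, (algebraMap K L τ) ^ q ^ j) + algebraMap K L δ) ^ q ^ j
        = (snq q n 2 L).eval (x + algebraMap K L τ)) := by
  haveI : Fact p.Prime := ⟨hp⟩
  have hq2 : 2 ≤ q := by rw [hq]; exact le_trans hp.two_le (Nat.le_self_pow he.ne' p)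
  -- K is finite of characteristic p
  haveI : Finite K := Nat.finite_of_card_ne_zero (by rw [hK]; positivity)
  haveI : Fintype K := Fintype.ofFinite K
  have hcard : Fintype.card K = q ^ n := by rw [← Nat.card_eq_fintype_card, hK]
  haveI : CharP K (ringChar K) := ringChar.charP K
  obtain ⟨m, hpr, hm⟩ := FiniteField.card K (ringChar K)
  have hrc : ringChar K = p := by
    have hd : ringChar K ∣ p ^ (e * n) := by
      have : ringChar K ^ (m : ℕ) = p ^ (e * n) := by
        rw [← hm, hcard, hq, ← pow_mul]
      exact this ▸ dvd_pow_self _ (by exact_mod_cast m.2.ne')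
    exact (Nat.prime_dvd_prime_iff_eq hpr hp).mp (hpr.dvd_of_dvd_pow hd)
  haveI hKp : CharP K p := hrc ▸ ringChar.charP K
  haveI : CharP L p := charP_of_injective_algebraMap (algebraMap K L).injective p
  haveI : ExpChar L p := ExpChar.prime hp
  set c : L := algebraMap K L τ with hc
  set d : L := algebraMap K L δ with hd
  -- Frobenius facts
  have hfrob : ∀ (a b : L) (k : ℕ), (a + b) ^ q ^ k = a ^ q ^ k + b ^ q ^ k := by
    intro a b k
    rw [hq, ← pow_mul]
    exact add_pow_char_pow ..
  have hsum_pow : ∀ (k : ℕ) (s : Finset ℕ) (f : ℕ → L),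
      (∑ i ∈ s, f i) ^ q ^ k = ∑ i ∈ s, (f i) ^ q ^ k := by
    intro k s f
    rw [hq, ← pow_mul]
    simpa only [iterateFrobenius_def] using map_sum (iterateFrobenius L p (e * k)) f s
  -- τ, hence c, satisfies c^(q^n) = c
  have hcqn : c ^ q ^ n = c := by
    have : τ ^ q ^ n = τ := by rw [← hcard]; exact FiniteField.pow_card τ
    rw [hc, ← map_pow, this]
  have hn0 : 0 < n := by omega
  -- key: Frobenius powers of the partial trace of c
  have hT : ∀ k ∈ Finset.range n,
      (∑ i ∈ Finset.Ico 1 n, c ^ q ^ i) ^ q ^ k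
        = (∑ i ∈ Finset.range n, c ^ q ^ i) - c ^ q ^ k := by
    intro k hk
    rw [hsum_pow]
    simp only [← pow_mul, ← pow_add]
    rw [eq_sub_iff_add_eq, add_comm]
    have h3 : c ^ q ^ (0 + k) + ∑ i ∈ Finset.Ico (0 + 1) n, c ^ q ^ (i + k)
        = ∑ i ∈ Finset.range n, c ^ q ^ i := by
      rw [← Finset.sum_eq_sum_Ico_succ_bot hn0 (fun i => c ^ q ^ (i + k)),
        ← Finset.range_eq_Ico]
      exact shift_sum c q n hn0 hcqn k
    simpa using h3
  set T : L := ∑ i ∈ Finset.Ico 1 n, c ^ q ^ i with hTdef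
  -- the left-hand sums of the two equations
  have hLHS : ∑ j ∈ Finset.range n, (y + x * T + d) ^ q ^ j
      = (∑ j ∈ Finset.range n, y ^ q ^ j)
        + ((∑ j ∈ Finset.range n, x ^ q ^ j) * (∑ j ∈ Finset.range n, c ^ q ^ j)
            - ∑ j ∈ Finset.range n, x ^ q ^ j * c ^ q ^ j)
        + ∑ k ∈ Finset.range n, ∑ j ∈ Finset.range k, c ^ (q ^ j + q ^ k) := by
    have step : ∀ j ∈ Finset.range n,
        (y + x * T + d) ^ q ^ j
          = y ^ q ^ j + (x ^ q ^ j * ((∑ i ∈ Finset.range n, c ^ q ^ i) - c ^ q ^ j))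
            + d ^ q ^ j := by
      intro j hj
      rw [hfrob, hfrob, mul_pow, hT j hj]
    rw [Finset.sum_congr rfl step, Finset.sum_add_distrib, Finset.sum_add_distrib]
    congr 1
    · congr 1
      simp only [mul_sub]
      rw [Finset.sum_sub_distrib, ← Finset.sum_mul]
    · -- trace of d equals s_{n,2}(τ) pushed to L
      have : ∑ j ∈ Finset.range n, d ^ q ^ j
          = algebraMap K L (∑ j ∈ Finset.range n, δ ^ q ^ j) := by
        rw [map_sum]; simp [hd, map_pow]
      rw [this, hτδ, snq2_eval, map_sum]
      refine Finset.sum_congr rfl fun k _ => ?_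
      rw [map_sum]
      exact Finset.sum_congr rfl fun j _ => by rw [map_pow]
  -- the right-hand sides
  have hRHS : (snq q n 2 L).eval (x + c)
      = (snq q n 2 L).eval x
        + ((∑ j ∈ Finset.range n, x ^ q ^ j) * (∑ j ∈ Finset.range n, c ^ q ^ j)
            - ∑ j ∈ Finset.range n, x ^ q ^ j * c ^ q ^ j)
        + ∑ k ∈ Finset.range n, ∑ j ∈ Finset.range k, c ^ (q ^ j + q ^ k) := by
    rw [snq2_eval, snq2_eval,
      ← pair_sum (fun j => x ^ q ^ j) (fun j => c ^ q ^ j) n, ← Finset.sum_add_distrib]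
    simp only [← Finset.sum_add_distrib]
    refine Finset.sum_congr rfl fun k _ => Finset.sum_congr rfl fun j _ => ?_
    rw [pow_add, pow_add, pow_add, hfrob, hfrob]
    ring
  rw [hLHS, hRHS, snq2_eval]
  constructor <;> intro h <;> linear_combination h
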